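/- Suppose (π, π̂) is a fixed point of (F, F̂), i.e. π = F(π̂) and π̂ = F̂(π). Then ∫_{(0,1)} η dπ(η) = 1 − ∫_{(0,1)} η̂ dπ̂(η̂), and ∫_{(0,1)} η̂ dπ̂(η̂) = (1 − c_β·h^{k−1})/(2 − c_β·h^{k−1}), where h = ∫_{(0,1)} η dπ(η). -/

import Mathlib

open MeasureTheory

/-- `z(η̂) = ∏_{j=1}^{d/2-1} η̂_j ∏_{j=d/2}^{d-1} (1-η̂_j) + ∏_{j=1}^{d/2-1} (1-η̂_j) ∏_{j=d/2}^{d-1} η̂_j`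
(coordinates of `Fin (d-1)` are 0-indexed: the first `d/2 - 1` of them, then the last `d/2`). -/
noncomputable def zf (d : ℕ) (η : Fin (d - 1) → ℝ) : ℝ :=
  (∏ j : Fin (d - 1), if (j : ℕ) < d / 2 - 1 then η j else 1 - η j) +
    ∏ j : Fin (d - 1), if (j : ℕ) < d / 2 - 1 then 1 - η j else η j

/-- `f(η̂) = (∏_{j=1}^{d/2-1} η̂_j ∏_{j=d/2}^{d-1} (1-η̂_j)) / z(η̂)`. -/
noncomputable def ff (d : ℕ) (η : Fin (d - 1) → ℝ) : ℝ :=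
  (∏ j : Fin (d - 1), if (j : ℕ) < d / 2 - 1 then η j else 1 - η j) / zf d η

/-- `ẑ(η) = 2 - c_β ∏_{j=1}^{k-1} η_j`, with `c_β = 1 - exp (-β)`. -/
noncomputable def zh (k : ℕ) (β : ℝ) (η : Fin (k - 1) → ℝ) : ℝ :=
  2 - (1 - Real.exp (-β)) * ∏ j, η j

/-- `f̂(η) = (1 - c_β ∏_{j=1}^{k-1} η_j) / ẑ(η)`. -/
noncomputable def fh (k : ℕ) (β : ℝ) (η : Fin (k - 1) → ℝ) : ℝ :=
  (1 - (1 - Real.exp (-β)) * ∏ j, η j) / zh k β η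

/-- The operator `F`: the pushforward under `f` of the probability measure on `(0,1)^{d-1}`
with density `z / ∫ z dπh^{⊗(d-1)}` with respect to `πh^{⊗(d-1)}`. -/
noncomputable def Fop (d : ℕ) (πh : Measure ℝ) : Measure ℝ :=
  Measure.map (ff d)
    ((Measure.pi fun _ : Fin (d - 1) => πh).withDensity fun η =>
      ENNReal.ofReal (zf d η / ∫ η', zf d η' ∂(Measure.pi fun _ : Fin (d - 1) => πh)))

/-- The operator `F̂`: the pushforward under `f̂` of the probability measure on `(0,1)^{k-1}`
with density `ẑ / ∫ ẑ dπ^{⊗(k-1)}` with respect to `π^{⊗(k-1)}`. -/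
noncomputable def Fhat (k : ℕ) (β : ℝ) (π : Measure ℝ) : Measure ℝ :=
  Measure.map (fh k β)
    ((Measure.pi fun _ : Fin (k - 1) => π).withDensity fun η =>
      ENNReal.ofReal (zh k β η / ∫ η', zh k β η' ∂(Measure.pi fun _ : Fin (k - 1) => π)))


open scoped NNReal ENNReal

section helpers
lemma fubini_pi {n : ℕ} (μ : Measure ℝ) [IsProbabilityMeasure μ] (f : Fin n → ℝ → ℝ) :
    ∫ x, ∏ i, f i (x i) ∂(Measure.pi fun _ : Fin n => μ) = ∏ i, ∫ x, f i x ∂μ := by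
  letI : MeasureSpace ℝ := { volume := μ }
  haveI : SigmaFinite (volume : Measure ℝ) := by
    show SigmaFinite μ; infer_instance
  exact MeasureTheory.integral_fintype_prod_eq_prod f

lemma ae_mem_Ioo (μ : Measure ℝ) [IsProbabilityMeasure μ] (hμ : μ (Set.Ioo 0 1) = 1) :
    ∀ᵐ x ∂μ, x ∈ Set.Ioo (0:ℝ) 1 := by
  rw [ae_iff]
  rw [show {x : ℝ | ¬ x ∈ Set.Ioo (0:ℝ) 1} = (Set.Ioo (0:ℝ) 1)ᶜ from rfl]
  rw [measure_compl measurableSet_Ioo (measure_ne_top _ _), hμ, measure_univ, tsub_self]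

lemma ae_pi_mem {n : ℕ} (μ : Measure ℝ) [IsProbabilityMeasure μ] (hμ : μ (Set.Ioo 0 1) = 1) :
    ∀ᵐ η ∂(Measure.pi fun _ : Fin n => μ), ∀ j, η j ∈ Set.Ioo (0:ℝ) 1 := by
  rw [ae_all_iff]
  intro j
  have h0 : μ (Set.Ioo (0:ℝ) 1)ᶜ = 0 := by
    rw [measure_compl measurableSet_Ioo (measure_ne_top _ _), hμ, measure_univ, tsub_self]
  have := Measure.pi_eval_preimage_null (μ := fun _ : Fin n => μ) (i := j) h0
  rw [ae_iff]
  exact this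

lemma card_filter_fin_lt (n a : ℕ) (h : a ≤ n) :
    (Finset.univ.filter fun j : Fin n => (j : ℕ) < a).card = a := by
  have : (Finset.univ.filter fun j : Fin n => (j : ℕ) < a) =
      Finset.map ⟨Fin.castLE h, Fin.castLE_injective h⟩ Finset.univ := by
    ext j
    simp only [Finset.mem_filter, Finset.mem_univ, true_and, Finset.mem_map,
      Function.Embedding.coeFn_mk]
    constructor
    · intro hj; exact ⟨⟨j, hj⟩, rfl⟩
    · rintro ⟨i, -, rfl⟩; exact i.2
  rw [this, Finset.card_map, Finset.card_univ, Fintype.card_fin]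

lemma key {n : ℕ} (μ : Measure ℝ) [IsProbabilityMeasure μ]
    (z num : (Fin n → ℝ) → ℝ) (hz : Measurable z) (hnum : Measurable num)
    (hzpos : ∀ᵐ η ∂(Measure.pi fun _ : Fin n => μ), 0 < z η) :
    ∫ x, x ∂(Measure.map (fun η => num η / z η)
      ((Measure.pi fun _ : Fin n => μ).withDensity fun η =>
        ENNReal.ofReal (z η / ∫ η', z η' ∂(Measure.pi fun _ : Fin n => μ)))) =
    (∫ η, num η ∂(Measure.pi fun _ : Fin n => μ)) /
      (∫ η, z η ∂(Measure.pi fun _ : Fin n => μ)) := by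
  set ν := Measure.pi fun _ : Fin n => μ with hν
  set Z := ∫ η', z η' ∂ν with hZdef
  have hZ0 : 0 ≤ Z := integral_nonneg_of_ae (hzpos.mono fun η h => h.le)
  have hmeas : Measurable fun η => num η / z η := hnum.div hz
  have hd : AEMeasurable (fun η => num η / z η)
      (ν.withDensity fun η => ENNReal.ofReal (z η / Z)) :=
    hmeas.aemeasurable.mono' (withDensity_absolutelyContinuous _ _)
  have hmap : ∫ x, x ∂(Measure.map (fun η => num η / z η)
      (ν.withDensity fun η => ENNReal.ofReal (z η / Z))) =
      ∫ η, num η / z η ∂(ν.withDensity fun η => ENNReal.ofReal (z η / Z)) :=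
    integral_map hd aestronglyMeasurable_id
  rw [hmap]
  have hcoe : (fun η => ENNReal.ofReal (z η / Z)) =
      fun η => (((z η / Z).toNNReal : ℝ≥0) : ℝ≥0∞) := rfl
  rw [hcoe, integral_withDensity_eq_integral_smul₀
    ((hz.div_const Z).real_toNNReal.aemeasurable) _]
  rw [← integral_div]
  refine integral_congr_ae (hzpos.mono fun η hη => ?_)
  show (z η / Z).toNNReal • (num η / z η) = num η / Z
  have h1 : ((z η / Z).toNNReal : ℝ) = z η / Z :=
    Real.coe_toNNReal _ (div_nonneg hη.le hZ0)
  rw [NNReal.smul_def, smul_eq_mul, h1]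
  rcases eq_or_lt_of_le hZ0 with h | h
  · simp [← h]
  · field_simp
end helpers

theorem stmt_6' (k d : ℕ) (hk : 2 ≤ k) (hd : 2 ≤ d) (hde : Even d) (β : ℝ) (hβ : 0 < β)
    (π πh : Measure ℝ) [IsProbabilityMeasure π] [IsProbabilityMeasure πh]
    (hπ : π (Set.Ioo 0 1) = 1) (hπh : πh (Set.Ioo 0 1) = 1)
    (hfix₁ : π = Measure.map
      (fun η : Fin (d-1) → ℝ =>
        (∏ j : Fin (d - 1), if (j : ℕ) < d / 2 - 1 then η j else 1 - η j) /
        ((∏ j : Fin (d - 1), if (j : ℕ) < d / 2 - 1 then η j else 1 - η j) +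
          ∏ j : Fin (d - 1), if (j : ℕ) < d / 2 - 1 then 1 - η j else η j))
      ((Measure.pi fun _ : Fin (d - 1) => πh).withDensity fun η =>
        ENNReal.ofReal (((∏ j : Fin (d - 1), if (j : ℕ) < d / 2 - 1 then η j else 1 - η j) +
          ∏ j : Fin (d - 1), if (j : ℕ) < d / 2 - 1 then 1 - η j else η j) /
          ∫ η', ((∏ j : Fin (d - 1), if (j : ℕ) < d / 2 - 1 then η' j else 1 - η' j) +
          ∏ j : Fin (d - 1), if (j : ℕ) < d / 2 - 1 then 1 - η' j else η' j)
            ∂(Measure.pi fun _ : Fin (d - 1) => πh))))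
    (hfix₂ : πh = Measure.map
      (fun η : Fin (k-1) → ℝ =>
        (1 - (1 - Real.exp (-β)) * ∏ j, η j) / (2 - (1 - Real.exp (-β)) * ∏ j, η j))
      ((Measure.pi fun _ : Fin (k - 1) => π).withDensity fun η =>
        ENNReal.ofReal ((2 - (1 - Real.exp (-β)) * ∏ j, η j) /
          ∫ η', (2 - (1 - Real.exp (-β)) * ∏ j, η' j)
            ∂(Measure.pi fun _ : Fin (k - 1) => π)))) :
    (∫ x, x ∂π) = 1 - ∫ x, x ∂πh ∧
      (∫ x, x ∂πh) =
        (1 - (1 - Real.exp (-β)) * (∫ x, x ∂π) ^ (k - 1)) /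
          (2 - (1 - Real.exp (-β)) * (∫ x, x ∂π) ^ (k - 1)) := by
  set c := 1 - Real.exp (-β) with hc
  have hexp : Real.exp (-β) < 1 := by
    calc Real.exp (-β) < Real.exp 0 := Real.exp_lt_exp.mpr (by linarith)
    _ = 1 := Real.exp_zero
  have hc0 : 0 < c := by rw [hc]; linarith
  have hc1 : c < 1 := by rw [hc]; have := Real.exp_pos (-β); linarith
  set m := ∫ x, x ∂π with hm
  set mh := ∫ x, x ∂πh with hmh
  -- basic facts about πh and its mean
  have haeh : ∀ᵐ x ∂πh, x ∈ Set.Ioo (0:ℝ) 1 := ae_mem_Ioo πh hπh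
  have hIid : Integrable (fun x : ℝ => x) πh :=
    (integrable_const 1).mono' measurable_id.aestronglyMeasurable
      (haeh.mono fun x hx => by
        rw [Real.norm_eq_abs, abs_of_pos hx.1]; exact hx.2.le)
  have h1m : ∫ x, (1 - x : ℝ) ∂πh = 1 - mh := by
    rw [integral_sub (integrable_const 1) hIid]
    simp [hmh, measure_univ]
  have h0mh : 0 < mh := by
    rw [hmh]
    rw [integral_pos_iff_support_of_nonneg_ae (haeh.mono fun x hx => hx.1.le) hIid]
    calc (0 : ℝ≥0∞) < 1 := by norm_num
    _ = πh (Set.Ioo 0 1) := hπh.symm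
    _ ≤ πh (Function.support fun x : ℝ => x) :=
      measure_mono fun x hx => ne_of_gt hx.1
  have hmh1 : mh < 1 := by
    have hI1 : Integrable (fun x : ℝ => 1 - x) πh := (integrable_const 1).sub hIid
    have hpos : 0 < ∫ x, (1 - x : ℝ) ∂πh := by
      rw [integral_pos_iff_support_of_nonneg_ae
        (haeh.mono fun x hx => by simp; linarith [hx.2]) hI1]
      calc (0 : ℝ≥0∞) < 1 := by norm_num
      _ = πh (Set.Ioo 0 1) := hπh.symm
      _ ≤ πh (Function.support fun x : ℝ => 1 - x) :=
        measure_mono fun x hx => by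
          show (1 : ℝ) - x ≠ 0
          have := hx.2; intro h; linarith
    rw [h1m] at hpos; linarith
  constructor
  · -- Part 1
    set a := d / 2 - 1 with hadef
    have ha : a ≤ d - 1 := by omega
    have he : d - 1 - a = a + 1 := by
      have := Nat.even_iff.mp hde; omega
    set ν₁ := Measure.pi fun _ : Fin (d - 1) => πh with hν₁
    have hmem₁ : ∀ᵐ η ∂ν₁, ∀ j, η j ∈ Set.Ioo (0:ℝ) 1 := ae_pi_mem πh hπh
    have hP1m : Measurable fun η : Fin (d-1) → ℝ =>
        ∏ j : Fin (d-1), if (j : ℕ) < a then η j else 1 - η j :=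
      Finset.measurable_prod _ fun j _ => by
        split_ifs
        exacts [measurable_pi_apply j, measurable_const.sub (measurable_pi_apply j)]
    have hP2m : Measurable fun η : Fin (d-1) → ℝ =>
        ∏ j : Fin (d-1), if (j : ℕ) < a then 1 - η j else η j :=
      Finset.measurable_prod _ fun j _ => by
        split_ifs
        exacts [measurable_const.sub (measurable_pi_apply j), measurable_pi_apply j]
    have hPP : ∀ᵐ η : Fin (d-1) → ℝ ∂ν₁,
        (0 < (∏ j : Fin (d-1), if (j : ℕ) < a then η j else 1 - η j) ∧
          (∏ j : Fin (d-1), if (j : ℕ) < a then η j else 1 - η j) ≤ 1) ∧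
        (0 < (∏ j : Fin (d-1), if (j : ℕ) < a then 1 - η j else η j) ∧
          (∏ j : Fin (d-1), if (j : ℕ) < a then 1 - η j else η j) ≤ 1) := by
      refine hmem₁.mono fun η h => ⟨⟨?_, ?_⟩, ⟨?_, ?_⟩⟩
      · exact Finset.prod_pos fun j _ => by
          split_ifs; exacts [(h j).1, by linarith [(h j).2]]
      · exact Finset.prod_le_one
          (fun j _ => by split_ifs; exacts [(h j).1.le, by linarith [(h j).2]])
          (fun j _ => by split_ifs; exacts [(h j).2.le, by linarith [(h j).1]])
      · exact Finset.prod_pos fun j _ => by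
          split_ifs; exacts [by linarith [(h j).2], (h j).1]
      · exact Finset.prod_le_one
          (fun j _ => by split_ifs; exacts [by linarith [(h j).2], (h j).1.le])
          (fun j _ => by split_ifs; exacts [by linarith [(h j).1], (h j).2.le])
    have hP1int : Integrable (fun η : Fin (d-1) → ℝ =>
        ∏ j : Fin (d-1), if (j : ℕ) < a then η j else 1 - η j) ν₁ :=
      (integrable_const 1).mono' hP1m.aestronglyMeasurable
        (hPP.mono fun η h => by rw [Real.norm_eq_abs, abs_of_pos h.1.1]; exact h.1.2)
    have hP2int : Integrable (fun η : Fin (d-1) → ℝ =>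
        ∏ j : Fin (d-1), if (j : ℕ) < a then 1 - η j else η j) ν₁ :=
      (integrable_const 1).mono' hP2m.aestronglyMeasurable
        (hPP.mono fun η h => by rw [Real.norm_eq_abs, abs_of_pos h.2.1]; exact h.2.2)
    have hcard₂ : (Finset.univ.filter fun j : Fin (d-1) => ¬ (j : ℕ) < a).card
        = d - 1 - a := by
      have h' := Finset.card_filter_add_card_filter_not
        (s := (Finset.univ : Finset (Fin (d-1)))) (p := fun j => (j : ℕ) < a)
      rw [card_filter_fin_lt _ a ha, Finset.card_univ, Fintype.card_fin] at h'
      omega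
    have hP1val : ∫ η, (∏ j : Fin (d-1), if (j : ℕ) < a then η j else 1 - η j) ∂ν₁
        = mh ^ a * (1 - mh) ^ (d - 1 - a) := by
      calc ∫ η, (∏ j : Fin (d-1), if (j : ℕ) < a then η j else 1 - η j) ∂ν₁
          = ∏ j : Fin (d-1), ∫ x, (if (j : ℕ) < a then x else 1 - x) ∂πh :=
            fubini_pi πh fun j x => if (j : ℕ) < a then x else 1 - x
        _ = ∏ j : Fin (d-1), (if (j : ℕ) < a then mh else 1 - mh) := by
            refine Finset.prod_congr rfl fun j _ => ?_
            by_cases h : (j : ℕ) < a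
            · simp only [if_pos h]; exact hmh.symm
            · simp only [if_neg h]; exact h1m
        _ = mh ^ a * (1 - mh) ^ (d - 1 - a) := by
            rw [Finset.prod_ite, Finset.prod_const, Finset.prod_const,
              card_filter_fin_lt _ a ha, hcard₂]
    have hP2val : ∫ η, (∏ j : Fin (d-1), if (j : ℕ) < a then 1 - η j else η j) ∂ν₁
        = (1 - mh) ^ a * mh ^ (d - 1 - a) := by
      calc ∫ η, (∏ j : Fin (d-1), if (j : ℕ) < a then 1 - η j else η j) ∂ν₁
          = ∏ j : Fin (d-1), ∫ x, (if (j : ℕ) < a then 1 - x else x) ∂πh :=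
            fubini_pi πh fun j x => if (j : ℕ) < a then 1 - x else x
        _ = ∏ j : Fin (d-1), (if (j : ℕ) < a then 1 - mh else mh) := by
            refine Finset.prod_congr rfl fun j _ => ?_
            by_cases h : (j : ℕ) < a
            · simp only [if_pos h]; exact h1m
            · simp only [if_neg h]; exact hmh.symm
        _ = (1 - mh) ^ a * mh ^ (d - 1 - a) := by
            rw [Finset.prod_ite, Finset.prod_const, Finset.prod_const,
              card_filter_fin_lt _ a ha, hcard₂]
    have hzpos₁ : ∀ᵐ η ∂ν₁, 0 < (∏ j : Fin (d-1), if (j : ℕ) < a then η j else 1 - η j)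
        + ∏ j : Fin (d-1), if (j : ℕ) < a then 1 - η j else η j :=
      hPP.mono fun η h => by linarith [h.1.1, h.2.1]
    have e1 : ∫ x, x ∂(Measure.map
        (fun η : Fin (d-1) → ℝ =>
          (∏ j : Fin (d-1), if (j : ℕ) < a then η j else 1 - η j) /
          ((∏ j : Fin (d-1), if (j : ℕ) < a then η j else 1 - η j)
            + ∏ j : Fin (d-1), if (j : ℕ) < a then 1 - η j else η j))
        (ν₁.withDensity fun η =>
          ENNReal.ofReal (((∏ j : Fin (d-1), if (j : ℕ) < a then η j else 1 - η j)
            + ∏ j : Fin (d-1), if (j : ℕ) < a then 1 - η j else η j) /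
            ∫ η', ((∏ j : Fin (d-1), if (j : ℕ) < a then η' j else 1 - η' j)
              + ∏ j : Fin (d-1), if (j : ℕ) < a then 1 - η' j else η' j) ∂ν₁))) =
        (∫ η, (∏ j : Fin (d-1), if (j : ℕ) < a then η j else 1 - η j) ∂ν₁) /
          ∫ η, ((∏ j : Fin (d-1), if (j : ℕ) < a then η j else 1 - η j)
            + ∏ j : Fin (d-1), if (j : ℕ) < a then 1 - η j else η j) ∂ν₁ :=
      key πh
      (fun η : Fin (d-1) → ℝ => (∏ j : Fin (d-1), if (j : ℕ) < a then η j else 1 - η j)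
        + ∏ j : Fin (d-1), if (j : ℕ) < a then 1 - η j else η j)
      (fun η : Fin (d-1) → ℝ => ∏ j : Fin (d-1), if (j : ℕ) < a then η j else 1 - η j)
      (hP1m.add hP2m) hP1m hzpos₁
    have hZ₁ : ∫ η, ((∏ j : Fin (d-1), if (j : ℕ) < a then η j else 1 - η j)
        + ∏ j : Fin (d-1), if (j : ℕ) < a then 1 - η j else η j) ∂ν₁
        = mh ^ a * (1 - mh) ^ (d - 1 - a) + (1 - mh) ^ a * mh ^ (d - 1 - a) := by
      rw [integral_add hP1int hP2int, hP1val, hP2val]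
    rw [hm, hfix₁, e1, hP1val, hZ₁, he]
    have ht : (0:ℝ) < mh * (1 - mh) := mul_pos h0mh (by linarith)
    have hsum : mh ^ a * (1 - mh) ^ (a + 1) + (1 - mh) ^ a * mh ^ (a + 1)
        = (mh * (1 - mh)) ^ a := by rw [mul_pow]; ring
    have hnum' : mh ^ a * (1 - mh) ^ (a + 1) = (mh * (1 - mh)) ^ a * (1 - mh) := by rw [mul_pow]; ring
    rw [hsum, hnum']
    exact mul_div_cancel_left₀ (1 - mh) (pow_ne_zero a (ne_of_gt ht))
  · -- Part 2
    set ν₂ := Measure.pi fun _ : Fin (k - 1) => π with hν₂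
    have hmem₂ : ∀ᵐ η ∂ν₂, ∀ j, η j ∈ Set.Ioo (0:ℝ) 1 := ae_pi_mem π hπ
    have hPm : Measurable fun η : Fin (k-1) → ℝ => ∏ j, η j :=
      Finset.measurable_prod _ fun j _ => measurable_pi_apply j
    have hprodIoo : ∀ᵐ η ∂ν₂, 0 < (∏ j, η j) ∧ (∏ j, η j) ≤ 1 :=
      hmem₂.mono fun η h =>
        ⟨Finset.prod_pos fun j _ => (h j).1,
         Finset.prod_le_one (fun j _ => (h j).1.le) (fun j _ => (h j).2.le)⟩
    have hPint : Integrable (fun η : Fin (k-1) → ℝ => ∏ j, η j) ν₂ :=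
      (integrable_const 1).mono' hPm.aestronglyMeasurable
        (hprodIoo.mono fun η h => by rw [Real.norm_eq_abs, abs_of_pos h.1]; exact h.2)
    have hPval : ∫ η, (∏ j, η j) ∂ν₂ = m ^ (k - 1) := by
      have h := fubini_pi (n := k - 1) π fun _ x => x
      rw [hν₂, h, Finset.prod_const, Finset.card_univ, Fintype.card_fin, hm]
    have hzm : Measurable fun η : Fin (k-1) → ℝ => 2 - c * ∏ j, η j :=
      measurable_const.sub (hPm.const_mul c)
    have hnm : Measurable fun η : Fin (k-1) → ℝ => 1 - c * ∏ j, η j :=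
      measurable_const.sub (hPm.const_mul c)
    have hzpos₂ : ∀ᵐ η ∂ν₂, 0 < 2 - c * ∏ j, η j :=
      hprodIoo.mono fun η h => by nlinarith [h.1, h.2]
    have hZ₂ : ∫ η, (2 - c * ∏ j, η j) ∂ν₂ = 2 - c * m ^ (k - 1) := by
      rw [integral_sub (integrable_const 2) (hPint.const_mul c),
        integral_const_mul _ _, hPval]
      simp [measure_univ]
    have hN₂ : ∫ η, (1 - c * ∏ j, η j) ∂ν₂ = 1 - c * m ^ (k - 1) := by
      rw [integral_sub (integrable_const 1) (hPint.const_mul c),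
        integral_const_mul _ _, hPval]
      simp [measure_univ]
    have e2 : ∫ x, x ∂(Measure.map
        (fun η : Fin (k-1) → ℝ =>
          (1 - c * ∏ j, η j) / (2 - c * ∏ j, η j))
        (ν₂.withDensity fun η =>
          ENNReal.ofReal ((2 - c * ∏ j, η j) /
            ∫ η', (2 - c * ∏ j, η' j) ∂ν₂))) =
        (∫ η, (1 - c * ∏ j, η j) ∂ν₂) / ∫ η, (2 - c * ∏ j, η j) ∂ν₂ :=
      key π (fun η : Fin (k-1) → ℝ => 2 - c * ∏ j, η j)
        (fun η : Fin (k-1) → ℝ => 1 - c * ∏ j, η j) hzm hnm hzpos₂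
    rw [hmh, hfix₂, e2, hZ₂, hN₂]


/-- If `(π, πh)` is a fixed point of `(F, F̂)` then `∫ η dπ = 1 - ∫ η̂ dπh` and
`∫ η̂ dπh = (1 - c_β h^{k-1})/(2 - c_β h^{k-1})` where `h = ∫ η dπ`. -/
theorem stmt_6 (k d : ℕ) (hk : 2 ≤ k) (hd : 2 ≤ d) (hde : Even d) (β : ℝ) (hβ : 0 < β)
    (π πh : Measure ℝ) [IsProbabilityMeasure π] [IsProbabilityMeasure πh]
    (hπ : π (Set.Ioo 0 1) = 1) (hπh : πh (Set.Ioo 0 1) = 1)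
    (hfix₁ : π = Fop d πh) (hfix₂ : πh = Fhat k β π) :
    (∫ x, x ∂π) = 1 - ∫ x, x ∂πh ∧
      (∫ x, x ∂πh) =
        (1 - (1 - Real.exp (-β)) * (∫ x, x ∂π) ^ (k - 1)) /
          (2 - (1 - Real.exp (-β)) * (∫ x, x ∂π) ^ (k - 1)) := by
  exact stmt_6' k d hk hd hde β hβ π πh hπ hπh hfix₁ hfix₂
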